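/- arXiv:2309.15468 — 7 statements merged into one kernel-verified Lean document; each statement's English description precedes it below -/
import Mathlib

section
/- The global transformation τ_e induced by an injective pattern e is injective. -/
/-- `c` matches the pattern `e` (with radii `L`, `R`, wildcard at position 0) at `n`. -/
def Matches (L R : ℕ) (e : ℤ → ZMod 2) (c : ℤ → ZMod 2) (n : ℤ) : Prop :=
  ∀ j : ℤ, -(L : ℤ) ≤ j → j ≤ (R : ℤ) → j ≠ 0 → c (n + j) = e j

/-- `e` is an injective pattern for radii `L`, `R`: every prefix sub-string containing
the wildcard differs from the suffix sub-string of the same length. -/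
def IsInjectivePattern (L R : ℕ) (e : ℤ → ZMod 2) : Prop :=
  ∀ s : ℤ, 1 ≤ s → s ≤ (R : ℤ) →
    ∃ j : ℤ, -(L : ℤ) ≤ j ∧ j ≤ (R : ℤ) - s ∧ j ≠ 0 ∧ j + s ≠ 0 ∧ e j ≠ e (j + s)

open Classical in
/-- The global transformation induced by the pattern `e`. -/
noncomputable def tau (L R : ℕ) (e : ℤ → ZMod 2) (c : ℤ → ZMod 2) : ℤ → ZMod 2 :=
  fun n => if Matches L R e c n then 1 + c n else c n

/-- A single configuration cannot match an injective pattern at two positions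
within distance `≤ R` of each other (right version). -/
lemma no_close_right (L R : ℕ) (e : ℤ → ZMod 2) (he : IsInjectivePattern L R e)
    (c : ℤ → ZMod 2) (n s : ℤ) (hs1 : 1 ≤ s) (hsR : s ≤ (R : ℤ))
    (h1 : Matches L R e c n) (h2 : Matches L R e c (n + s)) : False := by
  obtain ⟨j, hj1, hj2, hj3, hj4, hne⟩ := he s hs1 hsR
  apply hne
  have b := h1 (j + s) (by linarith) (by linarith) hj4
  have c1 := h2 j hj1 (by linarith) hj3
  calc e j = c (n + s + j) := c1.symm
    _ = c (n + (j + s)) := by rw [show n + s + j = n + (j + s) by ring]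
    _ = e (j + s) := b

/-- A single configuration cannot match an injective pattern at two distinct
positions within distance `≤ R` of each other. -/
lemma no_close (L R : ℕ) (e : ℤ → ZMod 2) (he : IsInjectivePattern L R e)
    (c : ℤ → ZMod 2) (n m : ℤ) (hnm : n ≠ m)
    (hub : m - n ≤ (R : ℤ)) (hlb : n - m ≤ (R : ℤ))
    (h1 : Matches L R e c n) (h2 : Matches L R e c m) : False := by
  rcases lt_trichotomy n m with h | h | h
  · exact no_close_right L R e he c n (m - n) (by omega) hub h1
      (by rwa [show n + (m - n) = m by ring])
  · exact hnm h
  · exact no_close_right L R e he c m (n - m) (by omega) hlb h2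
      (by rwa [show m + (n - m) = n by ring])

/-- Key lemma: if `c` matches at `n`, `c'` matches at `n + s` with `1 ≤ s ≤ R`,
and every difference position carries a match of one of them, contradiction. -/
lemma key (L R : ℕ) (hL : 1 ≤ L) (hLR : L ≤ R) (e : ℤ → ZMod 2)
    (he : IsInjectivePattern L R e) (c c' : ℤ → ZMod 2) (n s : ℤ)
    (hs1 : 1 ≤ s) (hsR : s ≤ (R : ℤ))
    (Hd : ∀ k, c k ≠ c' k → Matches L R e c k ∨ Matches L R e c' k)
    (h1 : Matches L R e c n) (h2 : Matches L R e c' (n + s)) : False := by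
  have hLR' : (L : ℤ) ≤ R := by exact_mod_cast hLR
  have hL' : (1 : ℤ) ≤ L := by exact_mod_cast hL
  obtain ⟨j, hj1, hj2, hj3, hj4, hne⟩ := he s hs1 hsR
  have hc : c (n + s + j) = e (j + s) := by
    have b := h1 (j + s) (by linarith) (by linarith) hj4
    rw [← b]; rw [show n + s + j = n + (j + s) by ring]
  have hc' : c' (n + s + j) = e j := h2 j hj1 (by linarith) hj3
  have hdiff : c (n + s + j) ≠ c' (n + s + j) := by
    rw [hc, hc']; exact fun h => hne h.symm
  rcases Hd _ hdiff with hm | hm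
  · exact no_close L R e he c n (n + s + j)
      (by intro h; apply hj4; omega) (by omega) (by omega) h1 hm
  · exact no_close L R e he c' (n + s) (n + s + j)
      (by intro h; apply hj3; omega) (by omega) (by omega) h2 hm

/-- Propagation step: if `c` matches at `n` but `c'` does not, and every
difference position carries a match of one of them, contradiction. -/
lemma step (L R : ℕ) (hL : 1 ≤ L) (hLR : L ≤ R) (e : ℤ → ZMod 2)
    (he : IsInjectivePattern L R e) (c c' : ℤ → ZMod 2) (n : ℤ)
    (Hd : ∀ k, c k ≠ c' k → Matches L R e c k ∨ Matches L R e c' k)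
    (hm : Matches L R e c n) (hnm : ¬ Matches L R e c' n) : False := by
  have hLR' : (L : ℤ) ≤ R := by exact_mod_cast hLR
  have hL' : (1 : ℤ) ≤ L := by exact_mod_cast hL
  have Hd' : ∀ k, c' k ≠ c k → Matches L R e c' k ∨ Matches L R e c k :=
    fun k hk => (Hd k hk.symm).symm
  unfold Matches at hnm
  push_neg at hnm
  obtain ⟨j₀, hj1, hj2, hj3, hj4⟩ := hnm
  have hcj : c (n + j₀) = e j₀ := hm j₀ hj1 hj2 hj3
  have hdiff : c (n + j₀) ≠ c' (n + j₀) := by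
    rw [hcj]; exact fun h => hj4 h.symm
  rcases Hd _ hdiff with hm2 | hm2
  · exact no_close L R e he c n (n + j₀)
      (by intro h; apply hj3; omega) (by omega) (by omega) hm hm2
  · rcases hj3.lt_or_gt with hneg | hpos
    · refine key L R hL hLR e he c' c (n + j₀) (-j₀) (by omega) (by omega)
        Hd' hm2 ?_
      rwa [show n + j₀ + -j₀ = n by ring]
    · exact key L R hL hLR e he c c' n j₀ hpos (by omega) Hd hm hm2

/-- the global transformation induced by an injective pattern is injective. -/
theorem tau_injective (L R : ℕ) (hL : 1 ≤ L) (hLR : L ≤ R)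
    (e : ℤ → ZMod 2) (he : IsInjectivePattern L R e) :
    Function.Injective (tau L R e) := by
  intro c c' h
  by_contra hne
  have F : ∀ k, c k ≠ c' k →
      (Matches L R e c k ∧ ¬ Matches L R e c' k) ∨
      (¬ Matches L R e c k ∧ Matches L R e c' k) := by
    intro k hk
    have hk2 := congrFun h k
    unfold tau at hk2
    by_cases h1 : Matches L R e c k <;> by_cases h2 : Matches L R e c' k <;>
      simp [h1, h2] at hk2 <;> tauto
  have Hd : ∀ k, c k ≠ c' k → Matches L R e c k ∨ Matches L R e c' k :=
    fun k hk => (F k hk).elim (fun h => Or.inl h.1) (fun h => Or.inr h.2)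
  have Hd' : ∀ k, c' k ≠ c k → Matches L R e c' k ∨ Matches L R e c k :=
    fun k hk => (Hd k hk.symm).symm
  have hex : ∃ n, c n ≠ c' n := by
    by_contra h'
    push_neg at h'
    exact hne (funext h')
  obtain ⟨n, hn⟩ := hex
  rcases F n hn with ⟨hm, hnm⟩ | ⟨hnm, hm⟩
  · exact step L R hL hLR e he c c' n Hd hm hnm
  · exact step L R hL hLR e he c' c n Hd' hm hnm
end

section
/- The global transformation τ_e induced by an injective pattern e is an involution: τ_e(τ_e(c)) = c for every configuration c; equivalently τ_e ∘ τ_e is the identity on configurations. -/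
/-- No two matches at distance at most `R`. -/
lemma no_two_matches (L R : ℕ) (e : ℤ → ZMod 2) (he : IsInjectivePattern L R e)
    (d : ℤ → ZMod 2) (n s : ℤ) (hs1 : 1 ≤ s) (hs2 : s ≤ (R : ℤ))
    (h1 : Matches L R e d n) (h2 : Matches L R e d (n + s)) : False := by
  obtain ⟨j, hj1, hj2, hj0, hjs0, hne⟩ := he s hs1 hs2
  have e1 : d (n + s + j) = e j := h2 j hj1 (by linarith) hj0
  have e2 : d (n + (j + s)) = e (j + s) :=
    h1 (j + s) (by linarith) (by linarith) hjs0
  apply hne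
  rw [← e1, ← e2]; ring_nf

lemma not_matches_near (L R : ℕ) (e : ℤ → ZMod 2) (he : IsInjectivePattern L R e)
    (hLR : L ≤ R) (d : ℤ → ZMod 2) (n j : ℤ) (hj1 : -(L : ℤ) ≤ j) (hj2 : j ≤ (R : ℤ))
    (hj0 : j ≠ 0) (h : Matches L R e d n) : ¬ Matches L R e d (n + j) := by
  intro h2
  rcases lt_or_gt_of_ne hj0 with hneg | hpos
  · refine no_two_matches L R e he d (n + j) (-j) (by linarith) ?_ h2 ?_
    · have : (L : ℤ) ≤ (R : ℤ) := by exact_mod_cast hLR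
      linarith
    · simpa using h
  · exact no_two_matches L R e he d n j hpos hj2 h h2

lemma matches_tau_iff (L R : ℕ) (e : ℤ → ZMod 2) (he : IsInjectivePattern L R e)
    (hLR : L ≤ R) (c : ℤ → ZMod 2) (n : ℤ) :
    Matches L R e (tau L R e c) n ↔ Matches L R e c n := by
  constructor
  · intro ht
    by_contra hc
    rw [Matches] at hc
    push_neg at hc
    obtain ⟨j, hj1, hj2, hj0, hne⟩ := hc
    have htj : tau L R e c (n + j) = e j := ht j hj1 hj2 hj0
    have hm : Matches L R e c (n + j) := by
      by_contra hm
      rw [tau] at htj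
      simp [hm] at htj
      exact hne htj
    -- then tau c matches at n + j as well
    have ht2 : Matches L R e (tau L R e c) (n + j) := by
      intro k hk1 hk2 hk0
      have hnm : ¬ Matches L R e c (n + j + k) :=
        not_matches_near L R e he hLR c (n + j) k hk1 hk2 hk0 hm
      rw [tau]
      simp only [hnm, if_false]
      exact hm k hk1 hk2 hk0
    exact not_matches_near L R e he hLR (tau L R e c) n j hj1 hj2 hj0 ht ht2
  · intro hc
    intro k hk1 hk2 hk0
    have hnm : ¬ Matches L R e c (n + k) :=
      not_matches_near L R e he hLR c n k hk1 hk2 hk0 hc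
    rw [tau]
    simp only [hnm, if_false]
    exact hc k hk1 hk2 hk0

/-- the global transformation induced by an injective pattern is an involution. -/
theorem tau_involution (L R : ℕ) (hL : 1 ≤ L) (hLR : L ≤ R)
    (e : ℤ → ZMod 2) (he : IsInjectivePattern L R e) :
    (∀ c : ℤ → ZMod 2, tau L R e (tau L R e c) = c) ∧
    tau L R e ∘ tau L R e = id := by
  have key : ∀ c : ℤ → ZMod 2, tau L R e (tau L R e c) = c := by
    intro c
    funext n
    by_cases hm : Matches L R e c n
    · have h1 : Matches L R e (tau L R e c) n := (matches_tau_iff L R e he hLR c n).2 hm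
      rw [tau]
      simp only [h1, if_true]
      rw [tau]
      simp only [hm, if_true]
      ring_nf
      rw [show ((2:ZMod 2) = 0) by decide]
      ring
    · have h1 : ¬ Matches L R e (tau L R e c) n := fun h =>
        hm ((matches_tau_iff L R e he hLR c n).1 h)
      rw [tau]
      simp only [h1, if_false]
      rw [tau]
      simp only [hm, if_false]
  exact ⟨key, funext fun c => key c⟩
end

section
/- Occurrences of an injective pattern cannot overlap: if a configuration c matches the injective pattern e at position n, then for every s with 1 ≤ s ≤ R, c does not match e at n + s and does not match e at n - s. -/
/-- occurrences of an injective pattern cannot overlap. -/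
theorem matches_no_overlap (L R : ℕ) (hL : 1 ≤ L) (hLR : L ≤ R)
    (e : ℤ → ZMod 2) (he : IsInjectivePattern L R e)
    (c : ℤ → ZMod 2) (n : ℤ) (hn : Matches L R e c n) :
    ∀ s : ℤ, 1 ≤ s → s ≤ (R : ℤ) →
      ¬ Matches L R e c (n + s) ∧ ¬ Matches L R e c (n - s) := by
  intro s hs1 hsR
  obtain ⟨j, hjL, hjR, hj0, hjs0, hne⟩ := he s hs1 hsR
  constructor
  · intro hm
    have h1 : c (n + (j + s)) = e (j + s) :=
      hn (j + s) (by linarith) (by linarith) hjs0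
    have h2 : c (n + s + j) = e j :=
      hm j hjL (by linarith) hj0
    apply hne
    rw [← h1, ← h2]; ring_nf
  · intro hm
    have h1 : c (n + j) = e j := hn j hjL (by linarith) hj0
    have h2 : c (n - s + (j + s)) = e (j + s) :=
      hm (j + s) (by linarith) (by linarith) hjs0
    apply hne
    rw [← h1, ← h2]; ring_nf
end

section
/- The injective pattern keeps its structure during the revolution: for every configuration c and every position n, the image τ_e(c) matches the injective pattern e at n if and only if c matches e at n. -/
lemma no_overlap (L R : ℕ) (e : ℤ → ZMod 2) (he : IsInjectivePattern L R e)
    (d : ℤ → ZMod 2) (n s : ℤ) (hs1 : 1 ≤ s) (hsR : s ≤ (R : ℤ))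
    (h1 : Matches L R e d n) (h2 : Matches L R e d (n + s)) : False := by
  obtain ⟨j, hj1, hj2, hj3, hj4, hj5⟩ := he s hs1 hsR
  have a := h2 j hj1 (by omega) hj3
  have b := h1 (j + s) (by omega) (by omega) hj4
  rw [show n + s + j = n + (j + s) by ring] at a
  exact hj5 (a.symm.trans b)

lemma no_overlap' (L R : ℕ) (hLR : L ≤ R) (e : ℤ → ZMod 2)
    (he : IsInjectivePattern L R e) (d : ℤ → ZMod 2) (n j : ℤ)
    (hj1 : -(L : ℤ) ≤ j) (hj2 : j ≤ (R : ℤ)) (hj3 : j ≠ 0)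
    (h1 : Matches L R e d n) (h2 : Matches L R e d (n + j)) : False := by
  rcases lt_or_gt_of_ne hj3 with h | h
  · exact no_overlap L R e he d (n + j) (-j) (by omega) (by omega) h2
      (by rw [show n + j + -j = n by ring]; exact h1)
  · exact no_overlap L R e he d n j h hj2 h1 h2

lemma tau_matches_of (L R : ℕ) (hLR : L ≤ R) (e : ℤ → ZMod 2)
    (he : IsInjectivePattern L R e) (c : ℤ → ZMod 2) (n : ℤ)
    (h : Matches L R e c n) : Matches L R e (tau L R e c) n := by
  intro j hj1 hj2 hj3
  have hnot : ¬ Matches L R e c (n + j) := fun hm =>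
    no_overlap' L R hLR e he c n j hj1 hj2 hj3 h hm
  simp only [tau, if_neg hnot]
  exact h j hj1 hj2 hj3

/-- the injective pattern keeps its structure during the revolution. -/
theorem tau_preserves_matches (L R : ℕ) (hL : 1 ≤ L) (hLR : L ≤ R)
    (e : ℤ → ZMod 2) (he : IsInjectivePattern L R e)
    (c : ℤ → ZMod 2) (n : ℤ) :
    Matches L R e (tau L R e c) n ↔ Matches L R e c n := by
  constructor
  · intro hτ j hj1 hj2 hj3
    have hnot : ¬ Matches L R e c (n + j) := fun hm =>
      no_overlap' L R hLR e he (tau L R e c) n j hj1 hj2 hj3 hτ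
        (tau_matches_of L R hLR e he c (n + j) hm)
    have := hτ j hj1 hj2 hj3
    simpa only [tau, if_neg hnot] using this
  · exact tau_matches_of L R hLR e he c n
end

section
/- For a pattern family P satisfying pattern independence, the set of matches is preserved by the mixture-induced transformation: for every configuration c, every p ∈ P and every n ∈ ℤ, the image τ_P(c) matches p at n if and only if c matches p at n. -/
/-- `c` matches the pattern `p` of the family (radii `Lp p`, `Rp p`, entries `ep p`,
wildcard at position 0) at position `n`. -/
def MatchesP {ι : Type*} (Lp Rp : ι → ℕ) (ep : ι → ℤ → ZMod 2)
    (p : ι) (c : ℤ → ZMod 2) (n : ℤ) : Prop :=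
  ∀ j : ℤ, -(Lp p : ℤ) ≤ j → j ≤ (Rp p : ℤ) → j ≠ 0 → c (n + j) = ep p j

/-- The pattern family satisfies pattern independence: whenever the center of one
window lies in the other's window (and we are not comparing a pattern with itself at
shift 0), the two patterns disagree at some common non-wildcard position. -/
def PatternIndependence {ι : Type*} (Lp Rp : ι → ℕ) (ep : ι → ℤ → ZMod 2) : Prop :=
  ∀ p q : ι, ∀ s : ℤ, ¬ (p = q ∧ s = 0) →
    ((-(Lp p : ℤ) ≤ s ∧ s ≤ (Rp p : ℤ)) ∨ (-(Lp q : ℤ) ≤ -s ∧ -s ≤ (Rp q : ℤ))) →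
    ∃ j : ℤ, -(Lp p : ℤ) ≤ j ∧ j ≤ (Rp p : ℤ) ∧
      s - (Lp q : ℤ) ≤ j ∧ j ≤ s + (Rp q : ℤ) ∧
      j ≠ 0 ∧ j ≠ s ∧ ep p j ≠ ep q (j - s)

open Classical in
/-- The patterns mixture-induced global transformation `τ_P`. -/
noncomputable def tauP {ι : Type*} (Lp Rp : ι → ℕ) (ep : ι → ℤ → ZMod 2)
    (c : ℤ → ZMod 2) : ℤ → ZMod 2 :=
  fun n => if ∃ p : ι, MatchesP Lp Rp ep p c n then 1 + c n else c n

/-- under pattern independence, the set of matches is preserved by the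
mixture-induced transformation. -/
theorem tauP_preserves_matches (ι : Type*) [Fintype ι]
    (Lp Rp : ι → ℕ) (ep : ι → ℤ → ZMod 2)
    (hrad : ∀ p : ι, 1 ≤ Lp p ∧ Lp p ≤ Rp p)
    (hind : PatternIndependence Lp Rp ep)
    (c : ℤ → ZMod 2) (p : ι) (n : ℤ) :
    MatchesP Lp Rp ep p (tauP Lp Rp ep c) n ↔ MatchesP Lp Rp ep p c n := by
  -- sparsity: two matches of c whose centers lie in each other's windows coincide
  have sparse : ∀ q q' : ι, ∀ m m' : ℤ, MatchesP Lp Rp ep q c m →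
      MatchesP Lp Rp ep q' c m' →
      ((-(Lp q : ℤ) ≤ m' - m ∧ m' - m ≤ (Rp q : ℤ)) ∨
        (-(Lp q' : ℤ) ≤ -(m' - m) ∧ -(m' - m) ≤ (Rp q' : ℤ))) →
      q = q' ∧ m = m' := by
    intro q q' m m' hq hq' hw
    by_contra hc
    obtain ⟨k, h1, h2, h3, h4, h5, h6, h7⟩ := hind q q' (m' - m)
      (fun ⟨he, hs⟩ => hc ⟨he, by omega⟩) hw
    have e1 := hq k h1 h2 h5
    have e2 := hq' (k - (m' - m)) (by omega) (by omega) (by omega)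
    rw [show m' + (k - (m' - m)) = m + k by ring] at e2
    exact h7 (e1 ▸ e2 ▸ rfl)
  have noMatchAux : ∀ q : ι, ∀ m j : ℤ, MatchesP Lp Rp ep q c m →
      -(Lp q : ℤ) ≤ j → j ≤ (Rp q : ℤ) → j ≠ 0 →
      tauP Lp Rp ep c (m + j) = c (m + j) := by
    intro q m j hq hj1 hj2 hj0
    unfold tauP
    rw [if_neg]
    rintro ⟨q', hq'⟩
    have := sparse q q' m (m + j) hq hq' (Or.inl ⟨by omega, by omega⟩)
    omega
  constructor
  · intro h j hj1 hj2 hj0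
    by_contra hne
    -- then tauP flips at n + j, so c matches some q at n + j
    have hflip : tauP Lp Rp ep c (n + j) ≠ c (n + j) := by
      intro he
      exact hne (he ▸ h j hj1 hj2 hj0)
    have hq : ∃ q : ι, MatchesP Lp Rp ep q c (n + j) := by
      by_contra hno
      exact hflip (if_neg hno)
    obtain ⟨q, hq⟩ := hq
    obtain ⟨k, h1, h2, h3, h4, h5, h6, h7⟩ := hind p q j
      (fun ⟨_, hs⟩ => hj0 hs) (Or.inl ⟨hj1, hj2⟩)
    have e1 := h k h1 h2 h5
    have e2 := hq (k - j) (by omega) (by omega) (by omega)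
    rw [show n + j + (k - j) = n + k by ring] at e2
    -- tauP c (n+k) = ep p k ≠ ep q (k - j) = c (n+k), so tauP flips at n+k
    have hflip2 : tauP Lp Rp ep c (n + k) ≠ c (n + k) := by
      rw [e1, e2]; exact h7
    have hq' : ∃ q' : ι, MatchesP Lp Rp ep q' c (n + k) := by
      by_contra hno
      exact hflip2 (if_neg hno)
    obtain ⟨q', hq'⟩ := hq'
    have := sparse q q' (n + j) (n + k) hq hq'
      (Or.inl ⟨by omega, by omega⟩)
    omega
  · intro h j hj1 hj2 hj0
    rw [noMatchAux p n j h hj1 hj2 hj0]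
    exact h j hj1 hj2 hj0
end

section
/- If a pattern family P satisfies pattern independence, then the patterns mixture-induced global transformation τ_P satisfies τ_P(τ_P(c)) = c for every configuration c; in particular τ_P is injective. -/
open Classical

lemma matchA {ι : Type*} {Lp Rp : ι → ℕ} {ep : ι → ℤ → ZMod 2}
    (hind : PatternIndependence Lp Rp ep)
    {p : ι} {c : ℤ → ZMod 2} {n : ℤ} (hp : MatchesP Lp Rp ep p c n)
    {j : ℤ} (h1 : -(Lp p : ℤ) ≤ j) (h2 : j ≤ (Rp p : ℤ)) (h3 : j ≠ 0) :
    ¬ ∃ q, MatchesP Lp Rp ep q c (n + j) := by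
  rintro ⟨q, hq⟩
  obtain ⟨j', hA, hB, hC, hD, hne0, hnej, hval⟩ :=
    hind p q j (by rintro ⟨rfl, rfl⟩; exact h3 rfl) (Or.inl ⟨h1, h2⟩)
  have hc1 := hp j' hA hB hne0
  have hc2 := hq (j' - j) (by linarith) (by linarith) (by omega)
  have heq : n + j + (j' - j) = n + j' := by ring
  rw [heq] at hc2
  exact hval (hc1.symm.trans hc2)

lemma tau_matches {ι : Type*} {Lp Rp : ι → ℕ} {ep : ι → ℤ → ZMod 2}
    (hind : PatternIndependence Lp Rp ep)
    {p : ι} {c : ℤ → ZMod 2} {n : ℤ} (hp : MatchesP Lp Rp ep p c n) :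
    MatchesP Lp Rp ep p (tauP Lp Rp ep c) n := by
  intro j h1 h2 h3
  show (if ∃ q, MatchesP Lp Rp ep q c (n + j) then 1 + c (n + j) else c (n + j)) = ep p j
  rw [if_neg (matchA hind hp h1 h2 h3)]
  exact hp j h1 h2 h3

lemma tau_matches_rev {ι : Type*} {Lp Rp : ι → ℕ} {ep : ι → ℤ → ZMod 2}
    (hind : PatternIndependence Lp Rp ep)
    {p : ι} {c : ℤ → ZMod 2} {n : ℤ} (hp : MatchesP Lp Rp ep p (tauP Lp Rp ep c) n) :
    MatchesP Lp Rp ep p c n := by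
  intro j h1 h2 h3
  have hnoq : ¬ ∃ q, MatchesP Lp Rp ep q c (n + j) := by
    rintro ⟨q, hq⟩
    exact matchA hind hp h1 h2 h3 ⟨q, tau_matches hind hq⟩
  have := hp j h1 h2 h3
  rwa [show tauP Lp Rp ep c (n + j) = c (n + j) from if_neg hnoq] at this

/-- under pattern independence, the patterns mixture-induced global
transformation is an involution; in particular it is injective. -/
theorem tauP_involutive_injective (ι : Type*) [Fintype ι]
    (Lp Rp : ι → ℕ) (ep : ι → ℤ → ZMod 2)
    (hrad : ∀ p : ι, 1 ≤ Lp p ∧ Lp p ≤ Rp p)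
    (hind : PatternIndependence Lp Rp ep) :
    (∀ c : ℤ → ZMod 2, tauP Lp Rp ep (tauP Lp Rp ep c) = c) ∧
    Function.Injective (tauP Lp Rp ep) := by
  have key : ∀ c : ℤ → ZMod 2, tauP Lp Rp ep (tauP Lp Rp ep c) = c := by
    intro c
    funext n
    by_cases h : ∃ p, MatchesP Lp Rp ep p c n
    · obtain ⟨p, hp⟩ := h
      have h1 : tauP Lp Rp ep c n = 1 + c n := if_pos ⟨p, hp⟩
      have h2 : tauP Lp Rp ep (tauP Lp Rp ep c) n = 1 + tauP Lp Rp ep c n :=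
        if_pos ⟨p, tau_matches hind hp⟩
      rw [h2, h1, ← add_assoc]
      norm_num
      rfl
    · have h' : ¬ ∃ p, MatchesP Lp Rp ep p (tauP Lp Rp ep c) n := by
        rintro ⟨p, hp⟩
        exact h ⟨p, tau_matches_rev hind hp⟩
      rw [show tauP Lp Rp ep (tauP Lp Rp ep c) n = tauP Lp Rp ep c n from if_neg h',
        show tauP Lp Rp ep c n = c n from if_neg h]
  exact ⟨key, fun a b hab => by rw [← key a, hab, key b]⟩
end

section
/- With left radius L = 1 and right radius R = 2 (neighbor size 4), the injective patterns are exactly the two map strings 0X10 and 1X01: a function e : ℤ → ZMod 2 satisfies the injective pattern condition for L = 1, R = 2 if and only if (e(-1), e(1), e(2)) is (0,1,0) or (1,0,1). -/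
/-- with left radius 1 and right radius 2 (neighbor size 4), the
injective patterns are exactly the two map strings `0X10` and `1X01`. -/
theorem injective_patterns_L1_R2 (e : ℤ → ZMod 2) :
    IsInjectivePattern 1 2 e ↔
      ((e (-1), e 1, e 2) = ((0 : ZMod 2), (1 : ZMod 2), (0 : ZMod 2)) ∨
       (e (-1), e 1, e 2) = ((1 : ZMod 2), (0 : ZMod 2), (1 : ZMod 2))) := by
  constructor
  · intro h
    obtain ⟨j, hj1, hj2, hj3, hj4, hne⟩ := h 1 (by norm_num) (by norm_num)
    have hj : j = 1 := by omega
    subst hj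
    obtain ⟨k, hk1, hk2, hk3, hk4, hne2⟩ := h 2 (by norm_num) (by norm_num)
    have hk : k = -1 := by omega
    subst hk
    norm_num at hne hne2
    have key : ∀ a b c : ZMod 2, a ≠ b → b ≠ c →
        (a, b, c) = ((0 : ZMod 2), 1, 0) ∨ (a, b, c) = ((1 : ZMod 2), 0, 1) := by
      decide
    exact key _ _ _ hne2 hne
  · intro h s hs1 hs2
    have hs : s = 1 ∨ s = 2 := by omega
    rcases hs with rfl | rfl
    · refine ⟨1, by norm_num, by norm_num, by norm_num, by norm_num, ?_⟩
      rcases h with h | h <;> simp_all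
    · refine ⟨-1, by norm_num, by norm_num, by norm_num, by norm_num, ?_⟩
      rcases h with h | h <;> simp_all
end
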